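/- Let f be a non-negative, non-increasing function satisfying lim_{x→x*} f(x + a(x)t)/f(x) = e^{−t} for all t∈ℝ, where a(x)>0 and a(x)/x→0 as x→x*. If f has a density f' that is monotone in a neighborhood of x*, then lim_{x→x*} f'(x + a(x)t)/f'(x) = e^{−t} for all t∈ℝ, and moreover −f(x)/a(x) ~ f'(x) as x→x*. -/

import Mathlib

open Filter Set Real



private lemma exp_quad_upper' {h : ℝ} (h0 : 0 ≤ h) (h1 : h ≤ 1/2) :
    Real.exp h ≤ 1 + h + 2*h^2 := by
  have k : (1 - h) * Real.exp h ≤ 1 := by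
    have h2 : 1 - h ≤ Real.exp (-h) := by
      have := Real.add_one_le_exp (-h); linarith
    have h3 : Real.exp (-h) * Real.exp h = 1 := by
      rw [← Real.exp_add]; simp
    calc (1-h) * Real.exp h ≤ Real.exp (-h) * Real.exp h :=
          mul_le_mul_of_nonneg_right h2 (Real.exp_pos h).le
      _ = 1 := h3
  nlinarith [Real.exp_pos h, sq_nonneg h]

private lemma exp_neg_quad' {h : ℝ} (h0 : 0 ≤ h) :
    Real.exp (-h) ≤ 1 - h + h^2 := by
  have k : Real.exp (-h) * (1 + h) ≤ 1 := by
    have h2 : 1 + h ≤ Real.exp h := by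
      have := Real.add_one_le_exp h; linarith
    have h3 : Real.exp (-h) * Real.exp h = 1 := by
      rw [← Real.exp_add]; simp
    calc Real.exp (-h) * (1 + h) ≤ Real.exp (-h) * Real.exp h :=
          mul_le_mul_of_nonneg_left h2 (Real.exp_pos (-h)).le
      _ = 1 := h3
  nlinarith [Real.exp_pos (-h), sq_nonneg h, mul_nonneg h0 (sq_nonneg h)]

private lemma mvt_aux' {f g : ℝ → ℝ} {I : Set ℝ} (hI : I.OrdConnected)
    (hd : ∀ x ∈ I, HasDerivAt f (-(g x)) x)
    {p q : ℝ} (hp : p ∈ I) (hq : q ∈ I) (hpq : p < q) :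
    ∃ ξ, ξ ∈ I ∧ p ≤ ξ ∧ ξ ≤ q ∧ f p - f q = g ξ * (q - p) := by
  have hsub : Icc p q ⊆ I := hI.out hp hq
  have hcont : ContinuousOn f (Icc p q) := fun x hx =>
    ((hd x (hsub hx)).continuousAt).continuousWithinAt
  obtain ⟨ξ, hξ, heq⟩ := exists_hasDerivAt_eq_slope f (fun y => -(g y)) hpq hcont
    (fun x hx => hd x (hsub (Ioo_subset_Icc_self hx)))
  refine ⟨ξ, hsub (Ioo_subset_Icc_self hξ), hξ.1.le, hξ.2.le, ?_⟩
  have hne : q - p ≠ 0 := sub_ne_zero.2 hpq.ne'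
  rw [eq_div_iff hne] at heq
  linear_combination heq

private lemma lem_upper' {F : Filter ℝ} {f g a : ℝ → ℝ} {I : Set ℝ} (t ε : ℝ) (hε : 0 < ε)
    (hI : I.OrdConnected) (hd : ∀ x ∈ I, HasDerivAt f (-(g x)) x) (hg : AntitoneOn g I)
    (hfpos : ∀ᶠ x in F, 0 < f x) (hapos : ∀ᶠ x in F, 0 < a x)
    (hmem : ∀ᶠ x in F, x + a x * (t-1) ∈ I ∧ x + a x * t ∈ I)
    (hgum : ∀ u : ℝ, Tendsto (fun x => f (x + a x * u) / f x) F (nhds (Real.exp (-u)))) :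
    ∀ᶠ x in F, a x * g (x + a x * t) / f x < Real.exp (-t) + ε := by
  set h : ℝ := min (ε * Real.exp t / 4) (1/2) with hh_def
  have hhpos : 0 < h := lt_min (by positivity) (by norm_num)
  have hh2 : h ≤ 1/2 := min_le_right _ _
  have hh1 : h ≤ ε * Real.exp t / 4 := min_le_left _ _
  have hup := (hgum (t - h)).eventually_lt_const
    (show Real.exp (-(t-h)) < Real.exp (-(t-h)) + h*ε/4 by nlinarith)
  have hlo := (hgum t).eventually_const_lt
    (show Real.exp (-t) - h*ε/4 < Real.exp (-t) by nlinarith)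
  filter_upwards [hfpos, hapos, hmem, hup, hlo] with x hfx hax hm h1 h2
  set p := x + a x * (t - h) with hp_def
  set q := x + a x * t with hq_def
  have hle1 : a x * (t-1) ≤ a x * (t-h) := by nlinarith
  have hle2 : a x * (t-h) ≤ a x * t := by nlinarith
  have hpI : p ∈ I := hI.out hm.1 hm.2 ⟨by simp only [hp_def]; linarith, by simp only [hp_def, hq_def]; linarith⟩
  have hpq : p < q := by
    have : a x * (t - h) < a x * t := by nlinarith
    simp only [hp_def, hq_def]; linarith
  obtain ⟨ξ, hξI, hξ1, hξ2, heq⟩ := mvt_aux' hI hd hpI hm.2 hpq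
  have hgq : g q ≤ g ξ := hg hξI hm.2 hξ2
  have hqp : q - p = a x * h := by simp only [hp_def, hq_def]; ring
  have key : a x * g q * h ≤ f p - f q := by
    rw [heq, hqp]; nlinarith
  have hfp : f p < (Real.exp (-(t - h)) + h * ε / 4) * f x := (div_lt_iff₀ hfx).1 h1
  have hfq : (Real.exp (-t) - h * ε / 4) * f x < f q := (lt_div_iff₀ hfx).1 h2
  have hstep : a x * g q / f x < (Real.exp (-(t-h)) - Real.exp (-t) + 2*(h*ε/4)) / h := by
    rw [div_lt_div_iff₀ hfx hhpos]
    nlinarith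
  have harith : (Real.exp (-(t-h)) - Real.exp (-t) + 2*(h*ε/4)) / h ≤ Real.exp (-t) + ε := by
    rw [div_le_iff₀ hhpos]
    have hE : Real.exp (-(t-h)) = Real.exp (-t) * Real.exp h := by
      rw [← Real.exp_add]; ring_nf
    have hq1 : Real.exp h ≤ 1 + h + 2*h^2 := exp_quad_upper' hhpos.le hh2
    have hprod : Real.exp (-t) * Real.exp t = 1 := by rw [← Real.exp_add]; simp
    rw [hE]
    nlinarith [Real.exp_pos (-t), Real.exp_pos t,
      mul_le_mul_of_nonneg_left hq1 (Real.exp_pos (-t)).le,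
      mul_le_mul_of_nonneg_left hh1 (Real.exp_pos (-t)).le]
  exact lt_of_lt_of_le hstep harith

private lemma lem_lower' {F : Filter ℝ} {f g a : ℝ → ℝ} {I : Set ℝ} (t ε : ℝ) (hε : 0 < ε)
    (hI : I.OrdConnected) (hd : ∀ x ∈ I, HasDerivAt f (-(g x)) x) (hg : AntitoneOn g I)
    (hfpos : ∀ᶠ x in F, 0 < f x) (hapos : ∀ᶠ x in F, 0 < a x)
    (hmem : ∀ᶠ x in F, x + a x * t ∈ I ∧ x + a x * (t+1) ∈ I)
    (hgum : ∀ u : ℝ, Tendsto (fun x => f (x + a x * u) / f x) F (nhds (Real.exp (-u)))) :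
    ∀ᶠ x in F, Real.exp (-t) - ε < a x * g (x + a x * t) / f x := by
  set h : ℝ := min (ε * Real.exp t / 4) (1/2) with hh_def
  have hhpos : 0 < h := lt_min (by positivity) (by norm_num)
  have hh2 : h ≤ 1/2 := min_le_right _ _
  have hh1 : h ≤ ε * Real.exp t / 4 := min_le_left _ _
  have hup := (hgum (t + h)).eventually_lt_const
    (show Real.exp (-(t+h)) < Real.exp (-(t+h)) + h*ε/4 by nlinarith)
  have hlo := (hgum t).eventually_const_lt
    (show Real.exp (-t) - h*ε/4 < Real.exp (-t) by nlinarith)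
  filter_upwards [hfpos, hapos, hmem, hup, hlo] with x hfx hax hm h1 h2
  set q := x + a x * t with hq_def
  set w := x + a x * (t + h) with hw_def
  have hle1 : a x * t ≤ a x * (t+h) := by nlinarith
  have hle2 : a x * (t+h) ≤ a x * (t+1) := by nlinarith
  have hwI : w ∈ I := hI.out hm.1 hm.2 ⟨by simp only [hw_def, hq_def]; linarith, by simp only [hw_def]; linarith⟩
  have hqw : q < w := by
    have : a x * t < a x * (t+h) := by nlinarith
    simp only [hq_def, hw_def]; linarith
  obtain ⟨ξ, hξI, hξ1, hξ2, heq⟩ := mvt_aux' hI hd hm.1 hwI hqw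
  have hgq : g ξ ≤ g q := hg hm.1 hξI hξ1
  have hwq : w - q = a x * h := by simp only [hq_def, hw_def]; ring
  have key : f q - f w ≤ a x * g q * h := by
    rw [heq, hwq]; nlinarith
  have hfw : f w < (Real.exp (-(t + h)) + h * ε / 4) * f x := (div_lt_iff₀ hfx).1 h1
  have hfq : (Real.exp (-t) - h * ε / 4) * f x < f q := (lt_div_iff₀ hfx).1 h2
  have hstep : (Real.exp (-t) - Real.exp (-(t+h)) - 2*(h*ε/4)) / h < a x * g q / f x := by
    rw [div_lt_div_iff₀ hhpos hfx]
    nlinarith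
  have harith : Real.exp (-t) - ε ≤ (Real.exp (-t) - Real.exp (-(t+h)) - 2*(h*ε/4)) / h := by
    rw [le_div_iff₀ hhpos]
    have hE : Real.exp (-(t+h)) = Real.exp (-t) * Real.exp (-h) := by
      rw [← Real.exp_add]; ring_nf
    have hq1 : Real.exp (-h) ≤ 1 - h + h^2 := exp_neg_quad' hhpos.le
    have hprod : Real.exp (-t) * Real.exp t = 1 := by rw [← Real.exp_add]; simp
    rw [hE]
    nlinarith [Real.exp_pos (-t), Real.exp_pos t,
      mul_le_mul_of_nonneg_left hq1 (Real.exp_pos (-t)).le,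
      mul_le_mul_of_nonneg_left hh1 (Real.exp_pos (-t)).le]
  exact lt_of_le_of_lt harith hstep

private lemma lem_tendsto' {F : Filter ℝ} {f g a : ℝ → ℝ} {I : Set ℝ} (t : ℝ)
    (hI : I.OrdConnected) (hd : ∀ x ∈ I, HasDerivAt f (-(g x)) x) (hg : AntitoneOn g I)
    (hfpos : ∀ᶠ x in F, 0 < f x) (hapos : ∀ᶠ x in F, 0 < a x)
    (hmem : ∀ᶠ x in F, x + a x * (t-1) ∈ I ∧ x + a x * t ∈ I ∧ x + a x * (t+1) ∈ I)
    (hgum : ∀ u : ℝ, Tendsto (fun x => f (x + a x * u) / f x) F (nhds (Real.exp (-u)))) :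
    Tendsto (fun x => a x * g (x + a x * t) / f x) F (nhds (Real.exp (-t))) := by
  rw [Metric.tendsto_nhds]
  intro ε hε
  have hup := lem_upper' t ε hε hI hd hg hfpos hapos
    (hmem.mono fun x hx => ⟨hx.1, hx.2.1⟩) hgum
  have hlo := lem_lower' t ε hε hI hd hg hfpos hapos
    (hmem.mono fun x hx => ⟨hx.2.1, hx.2.2⟩) hgum
  filter_upwards [hup, hlo] with x h1 h2
  rw [Real.dist_eq, abs_lt]
  exact ⟨by linarith, by linarith⟩

private lemma fpos_aux' {F : Filter ℝ} {f a : ℝ → ℝ} (hnn : ∀ᶠ x in F, 0 ≤ f x)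
    (hgum0 : Tendsto (fun x => f (x + a x * 0) / f x) F (nhds (Real.exp (-0)))) :
    ∀ᶠ x in F, 0 < f x := by
  have h := hgum0.eventually_const_lt (show (0:ℝ) < Real.exp (-0) by positivity)
  simp only [mul_zero, add_zero] at h
  filter_upwards [h, hnn] with x h1 h2
  rcases eq_or_lt_of_le h2 with h3 | h3
  · rw [← h3] at h1; norm_num at h1
  · exact h3

private lemma lem_contra' {F : Filter ℝ} [F.NeBot] {f g a : ℝ → ℝ} {I : Set ℝ}
    (hI : I.OrdConnected) (hd : ∀ x ∈ I, HasDerivAt f (-(g x)) x) (hg : MonotoneOn g I)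
    (hfpos : ∀ᶠ x in F, 0 < f x) (hapos : ∀ᶠ x in F, 0 < a x)
    (hmem : ∀ᶠ x in F, x + a x * (-2) ∈ I ∧ x ∈ I)
    (hgum : ∀ u : ℝ, Tendsto (fun x => f (x + a x * u) / f x) F (nhds (Real.exp (-u)))) :
    False := by
  have hA : Tendsto (fun x => f (x + a x * (-2))/f x - f (x + a x * (-1))/f x) F
      (nhds (Real.exp 2 - Real.exp 1)) := by
    have := (hgum (-2)).sub (hgum (-1)); simpa using this
  have hB : Tendsto (fun x => f (x + a x * (-1))/f x - f (x + a x * (0:ℝ))/f x) F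
      (nhds (Real.exp 1 - 1)) := by
    have := (hgum (-1)).sub (hgum 0); simpa using this
  have hle : (fun x => f (x + a x * (-2))/f x - f (x + a x * (-1))/f x) ≤ᶠ[F]
      (fun x => f (x + a x * (-1))/f x - f (x + a x * (0:ℝ))/f x) := by
    filter_upwards [hfpos, hapos, hmem] with x hfx hax hm
    set p := x + a x * (-2) with hp_def
    set q := x + a x * (-1) with hq_def
    set z := x + a x * (0:ℝ) with hz_def
    have hzx : z = x := by simp [hz_def]
    have hzI : z ∈ I := by rw [hzx]; exact hm.2
    have hle1 : a x * (-2) ≤ a x * (-1) := by nlinarith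
    have hle2 : a x * (-1) ≤ a x * 0 := by nlinarith
    have hqI : q ∈ I := hI.out hm.1 hzI ⟨by simp only [hq_def, hp_def]; linarith,
      by simp only [hq_def, hz_def]; linarith⟩
    have hpq : p < q := by
      have : a x * (-2) < a x * (-1) := by nlinarith
      simp only [hp_def, hq_def]; linarith
    have hqz : q < z := by
      have : a x * (-1) < a x * 0 := by nlinarith
      simp only [hq_def, hz_def]; linarith
    obtain ⟨ξ₁, hξ₁I, _, hξ₁q, he₁⟩ := mvt_aux' hI hd hm.1 hqI hpq
    obtain ⟨ξ₂, hξ₂I, hqξ₂, _, he₂⟩ := mvt_aux' hI hd hqI hzI hqz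
    have h1 : g ξ₁ ≤ g q := hg hξ₁I hqI hξ₁q
    have h2 : g q ≤ g ξ₂ := hg hqI hξ₂I hqξ₂
    have hqp : q - p = a x := by simp only [hp_def, hq_def]; ring
    have hzq : z - q = a x := by simp only [hz_def, hq_def]; ring
    rw [hqp] at he₁; rw [hzq] at he₂
    have hdiff : f p - f q ≤ f q - f z := by nlinarith
    show f p / f x - f q / f x ≤ f q / f x - f z / f x
    rw [div_sub_div_same, div_sub_div_same]
    gcongr
  have hcontra := le_of_tendsto_of_tendsto hA hB hle
  have he2 : Real.exp 2 = Real.exp 1 * Real.exp 1 := by rw [← Real.exp_add]; norm_num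
  have h1 : (1:ℝ) < Real.exp 1 := by have := Real.add_one_le_exp 1; linarith
  nlinarith

private lemma lem_finish' {F : Filter ℝ} {f f' a : ℝ → ℝ}
    (hfpos : ∀ᶠ x in F, 0 < f x) (hapos : ∀ᶠ x in F, 0 < a x)
    (hL : ∀ t : ℝ, Tendsto (fun x => a x * (-(f' (x + a x * t))) / f x) F (nhds (Real.exp (-t)))) :
    (∀ t : ℝ, Tendsto (fun x => f' (x + a x * t) / f' x) F (nhds (Real.exp (-t)))) ∧
      Tendsto (fun x => (-(f x) / a x) / f' x) F (nhds 1) := by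
  have h0 : Tendsto (fun x => a x * (-(f' x)) / f x) F (nhds 1) := by
    have := hL 0
    simp only [mul_zero, add_zero, neg_zero, Real.exp_zero] at this
    exact this
  constructor
  · intro t
    have hd := (hL t).div h0 one_ne_zero
    rw [div_one] at hd
    refine hd.congr' ?_
    filter_upwards [hfpos, hapos] with x hfx hax
    have h1 : a x ≠ 0 := hax.ne'
    have h2 : f x ≠ 0 := hfx.ne'
    by_cases hz : f' x = 0
    · simp [hz]
    · simp only [Pi.div_apply]
      field_simp
  · have hdi := h0.inv₀ one_ne_zero
    rw [inv_one] at hdi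
    refine hdi.congr fun x => ?_
    rw [inv_div, mul_neg, div_neg, div_div, neg_div]

private lemma case_top {f f' a : ℝ → ℝ} {s : Set ℝ} (hsF : s ∈ (atTop : Filter ℝ))
    (hf_nonneg : ∀ x : ℝ, 0 < x → 0 ≤ f x)
    (hf' : ∀ x : ℝ, 0 < x → HasDerivAt f (f' x) x)
    (hmono' : MonotoneOn f' s ∨ AntitoneOn f' s)
    (ha_pos : ∀ᶠ x in (atTop : Filter ℝ), 0 < a x)
    (ha_small : Tendsto (fun x => a x / x) atTop (nhds 0))
    (hgum : ∀ t : ℝ, Tendsto (fun x => f (x + a x * t) / f x) atTop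
      (nhds (Real.exp (-t)))) :
    (∀ t : ℝ, Tendsto (fun x => f' (x + a x * t) / f' x) atTop
      (nhds (Real.exp (-t)))) ∧
    Tendsto (fun x => (-(f x) / a x) / f' x) atTop (nhds 1) := by
  obtain ⟨N0, hN0⟩ := mem_atTop_sets.1 hsF
  set M := max N0 1 with hM
  set I : Set ℝ := Ici M with hI_def
  have hIoc : I.OrdConnected := ordConnected_Ici
  have hID : ∀ x ∈ I, (0:ℝ) < x := by
    intro x hx'
    have hx1 : (1:ℝ) ≤ x := le_trans (le_max_right N0 1) hx'
    linarith
  have hIs : I ⊆ s := fun x hx' => hN0 x (le_trans (le_max_left N0 1) hx')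
  have hd : ∀ x ∈ I, HasDerivAt f (-(-(f' x))) x := fun x hx' => by
    simpa using hf' x (hID x hx')
  have hmemTop : ∀ u : ℝ, ∀ᶠ x in atTop, x + a x * u ∈ I := by
    intro u
    have hu1 : (0:ℝ) < |u| + 1 := by positivity
    have hδ : (0:ℝ) < 1/(2*(|u|+1)) := by positivity
    have h1 : ∀ᶠ x in atTop, dist (a x / x) 0 < 1/(2*(|u|+1)) :=
      Metric.tendsto_nhds.1 ha_small _ hδ
    filter_upwards [h1, eventually_ge_atTop (max (2*M) 1)] with x hx1 hx2
    rw [Real.dist_eq, sub_zero] at hx1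
    have hx0 : (0:ℝ) < x := lt_of_lt_of_le one_pos (le_trans (le_max_right _ _) hx2)
    have hxM : 2*M ≤ x := le_trans (le_max_left _ _) hx2
    have hax : |a x| < x / (2*(|u|+1)) := by
      rw [abs_div, abs_of_pos hx0] at hx1

      calc |a x| = |a x| / x * x := by field_simp
        _ < 1/(2*(|u|+1)) * x := by
            exact mul_lt_mul_of_pos_right hx1 hx0
        _ = x / (2*(|u|+1)) := by ring
    have haxu : |a x * u| < x/2 := by
      rw [abs_mul]
      calc |a x| * |u| ≤ |a x| * (|u|+1) := by nlinarith [abs_nonneg (a x)]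
        _ < (x/(2*(|u|+1))) * (|u|+1) := mul_lt_mul_of_pos_right hax hu1
        _ = x/2 := by field_simp
    have hna := neg_abs_le (a x * u)
    simp only [hI_def, mem_Ici]
    linarith
  have hfnn : ∀ᶠ x in atTop, 0 ≤ f x := (eventually_ge_atTop M).mono
    (fun x hx' => hf_nonneg x (hID x hx'))
  have hfpos := fpos_aux' hfnn (hgum 0)
  rcases hmono' with hmono | hmono
  · have hganti : AntitoneOn (fun y => -(f' y)) I := fun u hu v hv huv =>
      neg_le_neg (hmono (hIs hu) (hIs hv) huv)
    have hL : ∀ t : ℝ, Tendsto (fun x => a x * (-(f' (x + a x * t))) / f x) atTop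
        (nhds (Real.exp (-t))) := by
      intro t
      exact lem_tendsto' (g := fun y => -(f' y)) t hIoc hd hganti hfpos ha_pos
        (by filter_upwards [hmemTop (t-1), hmemTop t, hmemTop (t+1)] with x h1 h2 h3
            exact ⟨h1, h2, h3⟩) hgum
    exact lem_finish' hfpos ha_pos hL
  · have hgmono : MonotoneOn (fun y => -(f' y)) I := fun u hu v hv huv =>
      neg_le_neg (hmono (hIs hu) (hIs hv) huv)
    exact (lem_contra' (g := fun y => -(f' y)) hIoc hd hgmono hfpos ha_pos
      (by filter_upwards [hmemTop (-2), eventually_ge_atTop M] with x h1 h2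
          exact ⟨h1, h2⟩) hgum).elim

set_option maxHeartbeats 1000000 in
private lemma case_fin {r : ℝ} (hr : 0 < r) {f f' a : ℝ → ℝ} {s : Set ℝ}
    (hsF : s ∈ nhdsWithin r (Set.Iio r))
    (hf_nonneg : ∀ x : ℝ, 0 < x → x < r → 0 ≤ f x)
    (hf_anti : ∀ x y : ℝ, 0 < x → x < r → 0 < y → y < r → x ≤ y → f y ≤ f x)
    (hf' : ∀ x : ℝ, 0 < x → x < r → HasDerivAt f (f' x) x)
    (hmono' : MonotoneOn f' s ∨ AntitoneOn f' s)
    (ha_pos : ∀ᶠ x in nhdsWithin r (Set.Iio r), 0 < a x)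
    (ha_small : Tendsto (fun x => a x / x) (nhdsWithin r (Set.Iio r)) (nhds 0))
    (hgum : ∀ t : ℝ, Tendsto (fun x => f (x + a x * t) / f x) (nhdsWithin r (Set.Iio r))
      (nhds (Real.exp (-t)))) :
    (∀ t : ℝ, Tendsto (fun x => f' (x + a x * t) / f' x) (nhdsWithin r (Set.Iio r))
      (nhds (Real.exp (-t)))) ∧
    Tendsto (fun x => (-(f x) / a x) / f' x) (nhdsWithin r (Set.Iio r)) (nhds 1) := by
  haveI : (nhdsWithin r (Set.Iio r)).NeBot := nhdsLT_neBot r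
  obtain ⟨l, hl, hls⟩ := mem_nhdsLT_iff_exists_Ioo_subset.1 hsF
  set c := max l 0 with hc_def
  have hc0 : (0:ℝ) ≤ c := le_max_right l 0
  have hcr : c < r := max_lt hl hr
  set I : Set ℝ := Ioo c r with hI_def
  have hIoc : I.OrdConnected := ordConnected_Ioo
  have hIs : I ⊆ s := fun x hx' => hls ⟨lt_of_le_of_lt (le_max_left l 0) hx'.1, hx'.2⟩
  have hID : ∀ x ∈ I, 0 < x ∧ x < r := by
    intro x hx'
    exact ⟨lt_of_le_of_lt hc0 hx'.1, hx'.2⟩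
  have hd : ∀ x ∈ I, HasDerivAt f (-(-(f' x))) x := fun x hx' => by
    simpa using hf' x (hID x hx').1 (hID x hx').2
  have hxF : ∀ᶠ x in nhdsWithin r (Set.Iio r), x ∈ I :=
    eventually_of_mem (Ioo_mem_nhdsLT hcr) (fun x hx' => hx')
  have hfnn : ∀ᶠ x in nhdsWithin r (Set.Iio r), 0 ≤ f x :=
    hxF.mono (fun x hx' => hf_nonneg x (hID x hx').1 (hID x hx').2)
  have hfpos := fpos_aux' hfnn (hgum 0)
  have hxr : Tendsto (fun x : ℝ => x) (nhdsWithin r (Set.Iio r)) (nhds r) :=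
    tendsto_id.mono_right nhdsWithin_le_nhds
  have ha0 : Tendsto a (nhdsWithin r (Set.Iio r)) (nhds 0) := by
    have h1 : Tendsto (fun x => a x / x * x) (nhdsWithin r (Set.Iio r)) (nhds (0 * r)) :=
      ha_small.mul hxr
    rw [zero_mul] at h1
    refine h1.congr' ?_
    filter_upwards [hxF] with x hx'
    have hx0 : x ≠ 0 := ne_of_gt (lt_of_le_of_lt hc0 hx'.1)
    field_simp
  have hmemPre : ∀ u : ℝ, (∀ᶠ x in nhdsWithin r (Set.Iio r), a x * u < r - x) →
      ∀ᶠ x in nhdsWithin r (Set.Iio r), x + a x * u ∈ I := by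
    intro u hu
    have hmid : ∀ᶠ x in nhdsWithin r (Set.Iio r), x ∈ Ioo ((c+r)/2) r :=
      eventually_of_mem (Ioo_mem_nhdsLT (by linarith)) (fun x hx' => hx')
    have habs0 : Tendsto (fun x => a x * |u|) (nhdsWithin r (Set.Iio r)) (nhds 0) := by
      have := ha0.mul_const (|u|)
      rwa [zero_mul] at this
    have habs : ∀ᶠ x in nhdsWithin r (Set.Iio r), a x * |u| < (r - c)/2 :=
      habs0.eventually_lt_const (by linarith)
    filter_upwards [hu, hmid, habs, ha_pos] with x h1 h2 h3 h4
    have hbd : -(a x * |u|) ≤ a x * u := by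
      have h5 := neg_abs_le (a x * u)
      rw [abs_mul, abs_of_pos h4] at h5; linarith
    constructor
    · linarith [h2.1]
    · linarith
  have hmemNeg : ∀ u : ℝ, u ≤ 0 → ∀ᶠ x in nhdsWithin r (Set.Iio r), x + a x * u ∈ I := by
    intro u hu
    apply hmemPre
    filter_upwards [ha_pos, hxF] with x h1 h2
    have h3 : a x * u ≤ 0 := mul_nonpos_of_nonneg_of_nonpos h1.le hu
    have h4 : x < r := h2.2
    linarith
  -- limit of f at the endpoint is 0
  have hImem : ((c+r)/2) ∈ I := ⟨by linarith, by linarith⟩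
  have hbdd : BddBelow (f '' I) := ⟨0, fun b hb => by
    obtain ⟨y, hy, rfl⟩ := hb; exact hf_nonneg y (hID y hy).1 (hID y hy).2⟩
  have hnem : (f '' I).Nonempty := ⟨f ((c+r)/2), mem_image_of_mem f hImem⟩
  set m := sInf (f '' I) with hm_def
  have hm0 : 0 ≤ m := le_csInf hnem (fun b hb => by
    obtain ⟨y, hy, rfl⟩ := hb; exact hf_nonneg y (hID y hy).1 (hID y hy).2)
  have htm : Tendsto f (nhdsWithin r (Set.Iio r)) (nhds m) := by
    rw [Metric.tendsto_nhds]
    intro ε hε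
    obtain ⟨b, hb, hbm⟩ := (csInf_lt_iff hbdd hnem).1
      (show sInf (f '' I) < m + ε by rw [← hm_def]; linarith)
    obtain ⟨z, hzI, rfl⟩ := hb
    have hev : ∀ᶠ x in nhdsWithin r (Set.Iio r), x ∈ Ioo z r :=
      eventually_of_mem (Ioo_mem_nhdsLT hzI.2) (fun x hx' => hx')
    filter_upwards [hev] with x hx'
    have hxI : x ∈ I := ⟨hzI.1.trans hx'.1, hx'.2⟩
    have h1 : m ≤ f x := csInf_le hbdd (mem_image_of_mem f hxI)
    have h2 : f x ≤ f z := hf_anti z x (hID z hzI).1 (hID z hzI).2 (hID x hxI).1 (hID x hxI).2 hx'.1.le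
    rw [Real.dist_eq, abs_lt]
    constructor <;> linarith
  have hm_zero : m = 0 := by
    by_contra hne
    have hm' : 0 < m := lt_of_le_of_ne hm0 (Ne.symm hne)
    have hphi : Tendsto (fun x => x + a x * (-1)) (nhdsWithin r (Set.Iio r))
        (nhdsWithin r (Set.Iio r)) := by
      rw [tendsto_nhdsWithin_iff]
      constructor
      · have h1 : Tendsto (fun x => x + a x * (-1)) (nhdsWithin r (Set.Iio r))
            (nhds (r + 0 * (-1))) := hxr.add (ha0.mul_const _)
        simpa using h1
      · filter_upwards [ha_pos, hxF] with x h1 h2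
        simp only [mem_Iio]
        nlinarith [h2.2]
    have hcomp : Tendsto (fun x => f (x + a x * (-1))) (nhdsWithin r (Set.Iio r))
        (nhds m) := htm.comp hphi
    have hdiv := hcomp.div htm hm'.ne'
    rw [div_self hm'.ne'] at hdiv
    have huniq := tendsto_nhds_unique hdiv (hgum (-1))
    rw [neg_neg] at huniq
    have hgt : (1:ℝ) < Real.exp 1 := by have := Real.add_one_le_exp 1; linarith
    linarith [huniq.ge, huniq.le]
  have hf0 : Tendsto f (nhdsWithin r (Set.Iio r)) (nhds 0) := hm_zero ▸ htm
  rcases hmono' with hmono | hmono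
  · have hganti : AntitoneOn (fun y => -(f' y)) I := fun u hu v hv huv =>
      neg_le_neg (hmono (hIs hu) (hIs hv) huv)
    have hg0 : ∀ w ∈ I, (0:ℝ) ≤ -(f' w) := by
      intro w hw
      have hwc : c < w := hw.1
      have hwr : w < r := hw.2
      have hz : (w + r)/2 ∈ I := ⟨by linarith, by linarith⟩
      have hwz : w < (w + r)/2 := by linarith
      obtain ⟨ξ, hξI, hwξ, _, he⟩ := mvt_aux' hIoc hd hw hz hwz
      have hfle : f ((w+r)/2) ≤ f w := hf_anti w _ (hID w hw).1 (hID w hw).2 (hID _ hz).1 (hID _ hz).2 hwz.le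
      have hgξ : (0:ℝ) ≤ -(f' ξ) := by nlinarith
      exact le_trans hgξ (hganti hw hξI hwξ)
    have hC : ∀ w ∈ I, f w ≤ (r - w) * (-(f' w)) := by
      intro w hw
      have hev : ∀ᶠ z in nhdsWithin r (Set.Iio r), f w - f z ≤ (r - w) * (-(f' w)) := by
        have hev0 : ∀ᶠ z in nhdsWithin r (Set.Iio r), z ∈ Ioo w r :=
          eventually_of_mem (Ioo_mem_nhdsLT hw.2) (fun z hz => hz)
        filter_upwards [hev0] with z hz
        have hzI : z ∈ I := ⟨hw.1.trans hz.1, hz.2⟩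
        obtain ⟨ξ, hξI, hwξ, hξz, he⟩ := mvt_aux' hIoc hd hw hzI hz.1
        have h1 : -(f' ξ) ≤ -(f' w) := hganti hw hξI hwξ
        nlinarith [hg0 w hw, hz.1, hz.2,
          mul_le_mul_of_nonneg_right h1 (by linarith : (0:ℝ) ≤ z - w),
          mul_nonneg (hg0 w hw) (sub_nonneg.2 hz.2.le)]
      have hlim : Tendsto (fun z => f w - f z) (nhdsWithin r (Set.Iio r))
          (nhds (f w - 0)) := tendsto_const_nhds.sub hf0
      have := le_of_tendsto hlim hev
      simpa using this
    have haux : ∀ v : ℝ,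
        (∀ᶠ x in nhdsWithin r (Set.Iio r), x + a x * (v - 1) ∈ I ∧ x + a x * v ∈ I) →
        ∀ᶠ x in nhdsWithin r (Set.Iio r), (v + 3/4) * a x ≤ r - x := by
      intro v hvmem
      have hev : (0:ℝ) < Real.exp (-v) := Real.exp_pos _
      have hεv : (0:ℝ) < Real.exp (-v) / 8 := by positivity
      have hup := lem_upper' (g := fun y => -(f' y)) v (Real.exp (-v)/8) hεv hIoc hd hganti
        hfpos ha_pos hvmem hgum
      have hlo := (hgum v).eventually_const_lt
        (show Real.exp (-v) - Real.exp (-v)/8 < Real.exp (-v) by linarith)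
      filter_upwards [hup, hlo, hfpos, ha_pos, hvmem] with x h1 h2 hfx hax hm
      set w := x + a x * v with hw_def
      have hwI : w ∈ I := hm.2
      have hwr : w < r := hwI.2
      have hfw : (0:ℝ) < f w := by
        have h3 : (0:ℝ) < Real.exp (-v) - Real.exp (-v)/8 := by linarith
        have h4 : (0:ℝ) < f w / f x := lt_trans h3 h2
        have h5 := mul_pos h4 hfx
        rwa [div_mul_cancel₀ _ hfx.ne'] at h5
      have hCw := hC w hwI
      have k1 : a x * (-(f' w)) < (Real.exp (-v) + Real.exp (-v)/8) * f x := by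
        have := (div_lt_iff₀ hfx).1 h1; linarith
      have k2 : (Real.exp (-v) - Real.exp (-v)/8) * f x < f w := (lt_div_iff₀ hfx).1 h2
      have s1 : a x * f w ≤ a x * ((r - w) * (-(f' w))) :=
        mul_le_mul_of_nonneg_left hCw hax.le
      have s3 : (r - w) * (a x * (-(f' w))) ≤
          (r - w) * ((Real.exp (-v) + Real.exp (-v)/8) * f x) :=
        mul_le_mul_of_nonneg_left k1.le (by linarith : (0:ℝ) ≤ r - w)
      have s4 : a x * ((Real.exp (-v) - Real.exp (-v)/8) * f x) < a x * f w :=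
        mul_lt_mul_of_pos_left k2 hax
      have s5 : a x * ((Real.exp (-v) - Real.exp (-v)/8) * f x) <
          (r - w) * ((Real.exp (-v) + Real.exp (-v)/8) * f x) := by nlinarith
      have key : (3/4) * a x ≤ r - w := by
        nlinarith [mul_pos hev hfx, hax]
      have hrx : r - x = (r - w) + a x * v := by rw [hw_def]; ring
      nlinarith [key]
    have hP : ∀ n : ℕ, ∀ᶠ x in nhdsWithin r (Set.Iio r),
        (1/2 + (n:ℝ)/2) * a x ≤ r - x := by
      intro n
      induction n with
      | zero =>
        have hmem0 : ∀ᶠ x in nhdsWithin r (Set.Iio r),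
            x + a x * ((0:ℝ) - 1) ∈ I ∧ x + a x * (0:ℝ) ∈ I := by
          filter_upwards [hmemNeg ((0:ℝ)-1) (by norm_num), hmemNeg 0 le_rfl] with x h1 h2
          exact ⟨h1, h2⟩
        have h0 := haux 0 hmem0
        filter_upwards [h0, ha_pos] with x h1 h2
        push_cast
        nlinarith
      | succ n ih =>
        have hub : ∀ u : ℝ, u ≤ 1/4 + (n:ℝ)/2 → ∀ᶠ x in nhdsWithin r (Set.Iio r),
            x + a x * u ∈ I := by
          intro u hu
          apply hmemPre
          filter_upwards [ih, ha_pos] with x h1 h2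
          have h3 : a x * u ≤ a x * (1/4 + (n:ℝ)/2) := by nlinarith
          nlinarith
        have hmemv : ∀ᶠ x in nhdsWithin r (Set.Iio r),
            x + a x * ((1/4 + (n:ℝ)/2) - 1) ∈ I ∧ x + a x * (1/4 + (n:ℝ)/2) ∈ I := by
          filter_upwards [hub ((1/4 + (n:ℝ)/2)-1) (by linarith), hub (1/4 + (n:ℝ)/2) le_rfl]
            with x h1 h2
          exact ⟨h1, h2⟩
        have hv2 := haux (1/4 + (n:ℝ)/2) hmemv
        filter_upwards [hv2] with x h1
        push_cast
        nlinarith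
    have hmemAll : ∀ u : ℝ, ∀ᶠ x in nhdsWithin r (Set.Iio r), x + a x * u ∈ I := by
      intro u
      obtain ⟨n, hn⟩ := exists_nat_ge (|u|)
      apply hmemPre
      filter_upwards [hP (2*n), ha_pos] with x h1 h2
      have hau : a x * u ≤ a x * |u| := by nlinarith [le_abs_self u]
      have hann : a x * |u| ≤ a x * n := by nlinarith [abs_nonneg u]
      push_cast at h1
      nlinarith
    have hL : ∀ t : ℝ, Tendsto (fun x => a x * (-(f' (x + a x * t))) / f x)
        (nhdsWithin r (Set.Iio r)) (nhds (Real.exp (-t))) := by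
      intro t
      exact lem_tendsto' (g := fun y => -(f' y)) t hIoc hd hganti hfpos ha_pos
        (by filter_upwards [hmemAll (t-1), hmemAll t, hmemAll (t+1)] with x h1 h2 h3
            exact ⟨h1, h2, h3⟩) hgum
    exact lem_finish' hfpos ha_pos hL
  · have hgmono : MonotoneOn (fun y => -(f' y)) I := fun u hu v hv huv =>
      neg_le_neg (hmono (hIs hu) (hIs hv) huv)
    exact (lem_contra' (g := fun y => -(f' y)) hIoc hd hgmono hfpos ha_pos
      (by filter_upwards [hmemNeg (-2) (by norm_num), hxF] with x h1 h2
          exact ⟨h1, h2⟩) hgum).elim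

theorem gumbel_condition_for_derivative
    (xstar : ENNReal) (hx : 0 < xstar) (f f' a : ℝ → ℝ)
    (F : Filter ℝ)
    (hF : F = if xstar = ⊤ then Filter.atTop
      else nhdsWithin xstar.toReal (Set.Iio xstar.toReal))
    (hf_nonneg : ∀ x : ℝ, 0 < x → ENNReal.ofReal x < xstar → 0 ≤ f x)
    (hf_anti : AntitoneOn f {x | 0 < x ∧ ENNReal.ofReal x < xstar})
    (hf' : ∀ x : ℝ, 0 < x → ENNReal.ofReal x < xstar → HasDerivAt f (f' x) x)
    (hf'_mono : ∃ s ∈ F, MonotoneOn f' s ∨ AntitoneOn f' s)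
    (ha_pos : ∀ᶠ x in F, 0 < a x)
    (ha_small : Tendsto (fun x => a x / x) F (nhds 0))
    (hgum : ∀ t : ℝ, Tendsto (fun x => f (x + a x * t) / f x) F
      (nhds (Real.exp (-t)))) :
    (∀ t : ℝ, Tendsto (fun x => f' (x + a x * t) / f' x) F
      (nhds (Real.exp (-t)))) ∧
    Tendsto (fun x => (-(f x) / a x) / f' x) F (nhds 1) := by
  obtain ⟨s, hsF, hmono⟩ := hf'_mono
  by_cases hxt : xstar = ⊤
  · have hFA : F = atTop := by rw [hF, if_pos hxt]
    subst hFA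
    have hlt : ∀ x : ℝ, ENNReal.ofReal x < xstar := fun x => by
      rw [hxt]; exact ENNReal.ofReal_lt_top
    exact case_top hsF (fun x h => hf_nonneg x h (hlt x)) (fun x h => hf' x h (hlt x))
      hmono ha_pos ha_small hgum
  · have hr : 0 < xstar.toReal := ENNReal.toReal_pos hx.ne' hxt
    have hFB : F = nhdsWithin xstar.toReal (Set.Iio xstar.toReal) := by rw [hF, if_neg hxt]
    subst hFB
    have hiff : ∀ x : ℝ, 0 < x → (ENNReal.ofReal x < xstar ↔ x < xstar.toReal) :=
      fun x hx0 => ENNReal.ofReal_lt_iff_lt_toReal hx0.le hxt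
    exact case_fin hr hsF
      (fun x h1 h2 => hf_nonneg x h1 ((hiff x h1).2 h2))
      (fun x y hx1 hx2 hy1 hy2 hxy =>
        hf_anti ⟨hx1, (hiff x hx1).2 hx2⟩ ⟨hy1, (hiff y hy1).2 hy2⟩ hxy)
      (fun x h1 h2 => hf' x h1 ((hiff x h1).2 h2))
      hmono ha_pos ha_small hgum
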